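/- Given a formal power series β(g) = b₂g² + b₃g³ + ∑_{r≥4} b_r g^r with b₂ ≠ 0, there exists a formal power series reparametrization h(ḡ) = ḡ + O(ḡ²) such that the transformed β-function β̄ = (β∘h)/h' equals exactly b₂ḡ² + b₃ḡ³ (all coefficients of order ≥ 4 vanish); the coefficients of h can be determined recursively order by order. -/

import Mathlib

open PowerSeries

/-- Composition `β ∘ h` of formal power series (meaningful when `h` has zero
constant term): the `n`-th coefficient is `∑_{k ≤ n} βₖ · coeff n (h^k)`. -/
noncomputable def psComp (β h : PowerSeries ℝ) : PowerSeries ℝ :=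
  PowerSeries.mk fun n =>
    ∑ k ∈ Finset.range (n + 1), PowerSeries.coeff k β * PowerSeries.coeff n (h ^ k)


lemma coeff_one_mul_zero (a b : PowerSeries ℝ) (ha : PowerSeries.coeff 0 a = 0)
    (hb : PowerSeries.coeff 0 b = 0) : PowerSeries.coeff 1 (a * b) = 0 := by
  rw [PowerSeries.coeff_mul, Finset.Nat.sum_antidiagonal_eq_sum_range_succ_mk]
  simp [Finset.sum_range_succ, ha, hb]

lemma coeff_zero_pow (a : PowerSeries ℝ) (ha : PowerSeries.coeff 0 a = 0) {k : ℕ}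
    (hk : 1 ≤ k) : PowerSeries.coeff 0 (a ^ k) = 0 := by
  rw [PowerSeries.coeff_zero_eq_constantCoeff] at *
  rw [map_pow, ha, zero_pow (by omega)]

lemma coeff_one_pow (a : PowerSeries ℝ) (ha : PowerSeries.coeff 0 a = 0) {k : ℕ}
    (hk : 2 ≤ k) : PowerSeries.coeff 1 (a ^ k) = 0 := by
  obtain ⟨j, rfl⟩ : ∃ j, k = j + 2 := ⟨k - 2, by omega⟩
  rw [pow_succ]
  exact coeff_one_mul_zero _ _ (coeff_zero_pow a ha (by omega)) ha

/-- difference of powers identity at a coefficient -/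
lemma coeff_pow_sub_pow (f g : PowerSeries ℝ) (k N : ℕ) :
    PowerSeries.coeff N (f ^ k) - PowerSeries.coeff N (g ^ k) =
      PowerSeries.coeff N
        ((∑ i ∈ Finset.range k, f ^ i * g ^ (k - 1 - i)) * (f - g)) := by
  rw [geom_sum₂_mul, map_sub]

/-- Lemma L : coeff N of k-th power (k ≥ 2) depends only on coefficients below N,
    given zero constant terms. -/
lemma coeff_pow_congr (f g : PowerSeries ℝ) (N k : ℕ)
    (h0f : PowerSeries.coeff 0 f = 0) (h0g : PowerSeries.coeff 0 g = 0)
    (hk : 2 ≤ k) (hagree : ∀ i < N, PowerSeries.coeff i f = PowerSeries.coeff i g) :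
    PowerSeries.coeff N (f ^ k) = PowerSeries.coeff N (g ^ k) := by
  have h := coeff_pow_sub_pow f g k N
  rw [← sub_eq_zero, h, PowerSeries.coeff_mul]
  apply Finset.sum_eq_zero
  rintro ⟨i, j⟩ hij
  rw [Finset.HasAntidiagonal.mem_antidiagonal] at hij
  rcases lt_or_ge j N with hj | hj
  · rw [map_sub, hagree j hj, sub_self, mul_zero]
  · have hi : i = 0 := by omega
    subst hi
    have : PowerSeries.coeff 0 (∑ i ∈ Finset.range k, f ^ i * g ^ (k - 1 - i)) = 0 := by
      rw [map_sum]
      apply Finset.sum_eq_zero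
      intro i hi
      rcases Nat.eq_zero_or_pos i with rfl | hpos
      · simpa using coeff_zero_pow g h0g (k := k - 1) (by omega)
      · rw [PowerSeries.coeff_zero_eq_constantCoeff, map_mul, map_pow,
          ← PowerSeries.coeff_zero_eq_constantCoeff, h0f, zero_pow (by omega),
          zero_mul]
    rw [this, zero_mul]

/-- Lemma P : effect of perturbing by `C t * X^(N-1)` on coeff N of a power. -/
lemma coeff_pow_perturb (g : PowerSeries ℝ) (t : ℝ) (N k : ℕ)
    (h0 : PowerSeries.coeff 0 g = 0) (hN : 3 ≤ N) (hk : 2 ≤ k) :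
    PowerSeries.coeff N ((g + PowerSeries.C t * PowerSeries.X ^ (N - 1)) ^ k) =
      PowerSeries.coeff N (g ^ k) +
        (if k = 2 then 2 * t * PowerSeries.coeff 1 g else 0) := by
  set f := g + PowerSeries.C t * PowerSeries.X ^ (N - 1) with hf
  have h0f : PowerSeries.coeff 0 f = 0 := by
    rw [hf, map_add, h0, PowerSeries.coeff_C_mul_X_pow]
    simp; omega
  have key := coeff_pow_sub_pow f g k N
  have hfg : f - g = PowerSeries.C t * PowerSeries.X ^ (N - 1) := by ring
  rw [hfg] at key
  have hu : PowerSeries.coeff N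
      ((∑ i ∈ Finset.range k, f ^ i * g ^ (k - 1 - i)) *
        (PowerSeries.C t * PowerSeries.X ^ (N - 1))) =
      t * PowerSeries.coeff 1 (∑ i ∈ Finset.range k, f ^ i * g ^ (k - 1 - i)) := by
    rw [show (∑ i ∈ Finset.range k, f ^ i * g ^ (k - 1 - i)) *
        (PowerSeries.C t * PowerSeries.X ^ (N - 1)) =
        PowerSeries.C t * ((∑ i ∈ Finset.range k, f ^ i * g ^ (k - 1 - i)) *
          PowerSeries.X ^ (N - 1)) by ring]
    rw [PowerSeries.coeff_C_mul, PowerSeries.coeff_mul_X_pow' _ (N-1) N,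
      if_pos (by omega), show N - (N - 1) = 1 by omega]
  rw [hu] at key
  have hsum : PowerSeries.coeff 1 (∑ i ∈ Finset.range k, f ^ i * g ^ (k - 1 - i)) =
      (if k = 2 then 2 * PowerSeries.coeff 1 g else 0) := by
    rw [map_sum]
    have h1f : PowerSeries.coeff 1 f = PowerSeries.coeff 1 g := by
      rw [hf, map_add, PowerSeries.coeff_C_mul_X_pow, if_neg (by omega), add_zero]
    rcases eq_or_lt_of_le hk with h2 | h3
    · subst h2
      simp only [Finset.sum_range_succ, Finset.range_one, Finset.sum_singleton]
      norm_num [h1f]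
      ring
    · rw [if_neg (by omega)]
      apply Finset.sum_eq_zero
      intro i hi
      rw [Finset.mem_range] at hi
      rcases Nat.eq_zero_or_pos i with rfl | hpos
      · simpa using coeff_one_pow g h0 (k := k - 1) (by omega)
      · rcases Nat.eq_zero_or_pos (k - 1 - i) with hz | hpos2
        · rw [hz, pow_zero, mul_one]
          exact coeff_one_pow f h0f (by omega)
        · exact coeff_one_mul_zero _ _ (coeff_zero_pow f h0f (by omega))
            (coeff_zero_pow g h0 (by omega))
  rw [hsum] at key
  rcases eq_or_ne k 2 with rfl | hne
  · norm_num at key ⊢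
    linarith
  · simp only [if_neg hne] at key ⊢
    linarith

noncomputable def cc (β : PowerSeries ℝ) (b₂ b₃ : ℝ) : ℕ → ℝ
  | 0 => 0
  | 1 => 1
  | 2 => 0
  | (m+3) =>
      (b₂ * (m+1 : ℝ))⁻¹ *
        ((∑ k ∈ Finset.Icc 2 (m+4),
            PowerSeries.coeff k β *
              PowerSeries.coeff (m+4)
                ((PowerSeries.mk (fun i => if _h : i < m+3 then cc β b₂ b₃ i else 0)) ^ k))
          - b₃ * (m+2 : ℝ) * cc β b₂ b₃ (m+2))
  decreasing_by all_goals omega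

lemma cc0 (β : PowerSeries ℝ) (b₂ b₃ : ℝ) : cc β b₂ b₃ 0 = 0 := by simp [cc]
lemma cc1 (β : PowerSeries ℝ) (b₂ b₃ : ℝ) : cc β b₂ b₃ 1 = 1 := by simp [cc]
lemma cc2 (β : PowerSeries ℝ) (b₂ b₃ : ℝ) : cc β b₂ b₃ 2 = 0 := by simp [cc]

noncomputable def gg (β : PowerSeries ℝ) (b₂ b₃ : ℝ) (M : ℕ) : PowerSeries ℝ :=
  PowerSeries.mk (fun i => if i < M then cc β b₂ b₃ i else 0)

lemma cc_succ (β : PowerSeries ℝ) (b₂ b₃ : ℝ) (m : ℕ) :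
    cc β b₂ b₃ (m+3) =
      (b₂ * (m+1 : ℝ))⁻¹ *
        ((∑ k ∈ Finset.Icc 2 (m+4),
            PowerSeries.coeff k β *
              PowerSeries.coeff (m+4) ((gg β b₂ b₃ (m+3)) ^ k))
          - b₃ * (m+2 : ℝ) * cc β b₂ b₃ (m+2)) := by
  rw [cc]
  congr 2

lemma gg_coeff (β : PowerSeries ℝ) (b₂ b₃ : ℝ) (M i : ℕ) :
    PowerSeries.coeff i (gg β b₂ b₃ M) = if i < M then cc β b₂ b₃ i else 0 := by
  simp [gg]

lemma gg_zero (β : PowerSeries ℝ) (b₂ b₃ : ℝ) (M : ℕ) :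
    PowerSeries.coeff 0 (gg β b₂ b₃ M) = 0 := by
  rw [gg_coeff]; split <;> simp [cc0]

lemma gg_succ (β : PowerSeries ℝ) (b₂ b₃ : ℝ) (M : ℕ) :
    gg β b₂ b₃ (M+1) = gg β b₂ b₃ M + PowerSeries.C (cc β b₂ b₃ M) * PowerSeries.X ^ M := by
  ext i
  rw [map_add, gg_coeff, gg_coeff, PowerSeries.coeff_C_mul_X_pow]
  rcases lt_trichotomy i M with h | rfl | h
  · rw [if_pos (by omega), if_pos h, if_neg (by omega), add_zero]
  · rw [if_pos (by omega), if_neg (by omega), if_pos rfl, zero_add]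
  · rw [if_neg (by omega), if_neg (by omega), if_neg (by omega), add_zero]

lemma main_eq (β : PowerSeries ℝ) (b₂ b₃ : ℝ)
    (hβ0 : PowerSeries.coeff 0 β = 0) (hβ1 : PowerSeries.coeff 1 β = 0)
    (hβ2 : PowerSeries.coeff 2 β = b₂) (hb₂ : b₂ ≠ 0) (m : ℕ) :
    ∑ k ∈ Finset.range (m+5),
        PowerSeries.coeff k β * PowerSeries.coeff (m+4) ((PowerSeries.mk (cc β b₂ b₃)) ^ k)
      = b₂ * ((m+3 : ℝ) * cc β b₂ b₃ (m+3)) + b₃ * ((m+2 : ℝ) * cc β b₂ b₃ (m+2)) := by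
  set c := cc β b₂ b₃ with hc
  set h : PowerSeries ℝ := PowerSeries.mk c with hh
  have h0h : PowerSeries.coeff 0 h = 0 := by simp [hh, hc, cc0]
  have hrange : Finset.range (m+5) = insert 0 (insert 1 (Finset.Icc 2 (m+4))) := by
    ext x; simp; omega
  rw [hrange, Finset.sum_insert (by simp), Finset.sum_insert (by simp), hβ0, hβ1,
    zero_mul, zero_mul, zero_add, zero_add]
  -- replace h by its truncation gg (m+4)
  have step1 : ∀ k ∈ Finset.Icc 2 (m+4),
      PowerSeries.coeff k β * PowerSeries.coeff (m+4) (h ^ k)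
        = PowerSeries.coeff k β *
            (PowerSeries.coeff (m+4) ((gg β b₂ b₃ (m+3)) ^ k)
              + (if k = 2 then 2 * c (m+3) * 1 else 0)) := by
    intro k hk
    rw [Finset.mem_Icc] at hk
    congr 1
    have e1 : PowerSeries.coeff (m+4) (h ^ k)
        = PowerSeries.coeff (m+4) ((gg β b₂ b₃ (m+4)) ^ k) := by
      apply coeff_pow_congr _ _ _ _ h0h (gg_zero β b₂ b₃ _) hk.1
      intro i hi
      rw [gg_coeff, if_pos hi]; simp [hh, hc]
    rw [e1, gg_succ]
    have e2 := coeff_pow_perturb (gg β b₂ b₃ (m+3)) (c (m+3)) (m+4) k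
      (gg_zero β b₂ b₃ _) (by omega) hk.1
    rw [show m+4-1 = m+3 from rfl] at e2
    rw [e2]
    congr 1
    have : PowerSeries.coeff 1 (gg β b₂ b₃ (m+3)) = 1 := by
      rw [gg_coeff, if_pos (by omega)]; exact cc1 β b₂ b₃
    rw [this]
  rw [Finset.sum_congr rfl step1]
  simp only [mul_add, Finset.sum_add_distrib]
  have e3 : ∑ k ∈ Finset.Icc 2 (m+4),
      PowerSeries.coeff k β * (if k = 2 then 2 * c (m+3) * 1 else 0)
      = b₂ * (2 * c (m+3)) := by
    rw [Finset.sum_congr rfl (fun k _ => mul_ite _ _ _ _)]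
    simp only [mul_zero]
    rw [Finset.sum_ite_eq' (Finset.Icc 2 (m+4)) 2
      (fun k => PowerSeries.coeff k β * (2 * c (m+3) * 1))]
    rw [if_pos (by simp), hβ2]; ring
  rw [e3]
  have e4 : ∑ k ∈ Finset.Icc 2 (m+4),
      PowerSeries.coeff k β * PowerSeries.coeff (m+4) ((gg β b₂ b₃ (m+3)) ^ k)
      = b₂ * (m+1 : ℝ) * c (m+3) + b₃ * (m+2 : ℝ) * c (m+2) := by
    have := cc_succ β b₂ b₃ m
    rw [← hc] at this
    have hne : (b₂ * (m+1 : ℝ)) ≠ 0 := by positivity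
    field_simp at this
    linarith [this]
  rw [e4]
  ring

/-- Cubic normal form of the β-function: if `β(g) = b₂ g² + b₃ g³ + O(g⁴)` with
`b₂ ≠ 0`, there is a formal reparametrization `h(ḡ) = ḡ + O(ḡ²)` such that the
transformed β-function `β̄ = (β ∘ h)/h'` is exactly `b₂ ḡ² + b₃ ḡ³`. -/
theorem beta_cubic_normal_form
    (β : PowerSeries ℝ) (b₂ b₃ : ℝ)
    (hβ0 : PowerSeries.coeff 0 β = 0) (hβ1 : PowerSeries.coeff 1 β = 0)
    (hβ2 : PowerSeries.coeff 2 β = b₂) (hβ3 : PowerSeries.coeff 3 β = b₃)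
    (hb₂ : b₂ ≠ 0) :
    ∃ h : PowerSeries ℝ,
      PowerSeries.coeff 0 h = 0 ∧ PowerSeries.coeff 1 h = 1 ∧
      psComp β h =
        (PowerSeries.C b₂ * PowerSeries.X ^ 2 + PowerSeries.C b₃ * PowerSeries.X ^ 3) *
          PowerSeries.derivativeFun h := by
  set c := cc β b₂ b₃ with hcdef
  refine ⟨PowerSeries.mk c, by simp [hcdef, cc0], by simp [hcdef, cc1], ?_⟩
  set h : PowerSeries ℝ := PowerSeries.mk c with hh
  have hD : ∀ j, PowerSeries.coeff j (PowerSeries.derivativeFun h) = c (j+1) * (j+1) :=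
    fun j => by show PowerSeries.coeff j (PowerSeries.derivative ℝ h) = _; rw [PowerSeries.coeff_derivative, hh, PowerSeries.coeff_mk]
  have hsq : ∀ n, PowerSeries.coeff n (h^2) =
      ∑ i ∈ Finset.range (n+1), c i * c (n-i) := by
    intro n
    rw [pow_two, hh, PowerSeries.coeff_mul, Finset.Nat.sum_antidiagonal_eq_sum_range_succ_mk]
    simp
  ext n
  rw [psComp, PowerSeries.coeff_mk, add_mul, map_add, mul_assoc, mul_assoc,
    PowerSeries.coeff_C_mul, PowerSeries.coeff_C_mul,
    PowerSeries.coeff_X_pow_mul', PowerSeries.coeff_X_pow_mul']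
  match n with
  | 0 => simp [hβ0]
  | 1 => simp [hβ0, hβ1, Finset.sum_range_succ]
  | 2 =>
    rw [if_pos (by omega), if_neg (by omega)]
    simp only [Finset.sum_range_succ, Finset.sum_range_zero, pow_zero, pow_one]
    rw [hβ0, hβ1, hβ2, hsq]
    simp [Finset.sum_range_succ, hcdef, cc0, cc1, hD, mul_zero]
  | 3 =>
    rw [if_pos (by omega), if_pos (by omega)]
    have h3 : PowerSeries.coeff 3 (h^3) = 1 := by
      rw [show (3:ℕ) = 2 + 1 from rfl, pow_succ, PowerSeries.coeff_mul,
        Finset.Nat.sum_antidiagonal_eq_sum_range_succ_mk]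
      simp only [Finset.sum_range_succ, Finset.sum_range_zero, hsq]
      simp [Finset.sum_range_succ, hh, hcdef, cc0, cc1, cc2]
    have h2 : PowerSeries.coeff 3 (h^2) = 0 := by
      rw [hsq]; simp [Finset.sum_range_succ, hcdef, cc0, cc2]
    simp only [Finset.sum_range_succ, Finset.sum_range_zero, pow_zero, pow_one]
    rw [hβ0, hβ1, hβ2, hβ3, h2, h3]
    simp [hD, hcdef, cc1, cc2]
  | (m+4) =>
    rw [if_pos (by omega), if_pos (by omega)]
    have := main_eq β b₂ b₃ hβ0 hβ1 hβ2 hb₂ m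
    rw [← hcdef, ← hh] at this
    rw [show m+4+1 = m+5 from rfl, this,
      show m+4-2 = m+2 from rfl, show m+4-3 = m+1 from rfl, hD, hD]
    push_cast
    ring
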